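/- Let d ≥ 2, r > 0, a > 0, x̄ ∈ ℝ^d, and let e₁ be the first standard basis vector of ℝ^d. Let S be a Lebesgue-measurable subset of the closed Euclidean ball B(x̄, r) such that any two points of S on a common line parallel to e₁ are at distance less than a: for all x, y ∈ S with y − x ∈ ℝ·e₁, ‖y − x‖ < a. Then vol_d(S) ≤ a · vol_{d−1}(B^{d−1}(0, r)), where vol_k denotes k-dimensional Lebesgue measure and B^{d−1}(0, r) ⊂ ℝ^{d−1} is the Euclidean ball of radius r. In particular, if a = δr/√d with δ ∈ (0, 1], then vol_d(S) ≤ δ · vol_d(B(x̄, r)). -/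

import Mathlib

open MeasureTheory Metric

lemma gamma_step (x : ℝ) (hx : 0 < x) :
    Real.Gamma (x + 1) ≤ Real.sqrt (x + 1/2) * Real.Gamma (x + 1/2) := by
  have h12 : (0:ℝ) < x + 1/2 := by linarith
  have h32 : (0:ℝ) < x + 3/2 := by linarith
  have hconv := Real.convexOn_log_Gamma.2 (Set.mem_Ioi.2 h12) (Set.mem_Ioi.2 h32)
      (le_of_lt one_half_pos) (le_of_lt one_half_pos) (by norm_num)
  have hmid : (1/2 : ℝ) • (x + 1/2) + (1/2 : ℝ) • (x + 3/2) = x + 1 := by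
    simp [smul_eq_mul]; ring
  rw [hmid] at hconv
  have hG32 : Real.Gamma (x + 3/2) = (x + 1/2) * Real.Gamma (x + 1/2) := by
    have := Real.Gamma_add_one h12.ne'
    convert this using 2 <;> ring
  have hGpos : 0 < Real.Gamma (x + 1/2) := Real.Gamma_pos_of_pos h12
  have hRpos : 0 < Real.sqrt (x + 1/2) * Real.Gamma (x + 1/2) := by positivity
  have hLpos : 0 < Real.Gamma (x + 1) := Real.Gamma_pos_of_pos (by linarith)
  rw [← Real.log_le_log_iff hLpos hRpos]
  have : Real.log (Real.sqrt (x + 1/2) * Real.Gamma (x + 1/2))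
      = 1/2 * Real.log (x + 1/2) + Real.log (Real.Gamma (x + 1/2)) := by
    rw [Real.log_mul (Real.sqrt_pos.2 h12).ne' hGpos.ne', Real.log_sqrt h12.le]
    ring
  rw [this]
  have hrhs : Real.log (Real.Gamma (x + 3/2))
      = Real.log (x + 1/2) + Real.log (Real.Gamma (x + 1/2)) := by
    rw [hG32, Real.log_mul h12.ne' hGpos.ne']
  simp only [smul_eq_mul, Function.comp_apply] at hconv
  rw [hrhs] at hconv
  linarith

theorem stuck_region_volume (d : ℕ) (hd : 2 ≤ d) (r a δ : ℝ) (hr : 0 < r) (ha : 0 < a)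
    (hδ0 : 0 < δ) (hδ1 : δ ≤ 1) (xbar : EuclideanSpace ℝ (Fin d))
    (e₁ : EuclideanSpace ℝ (Fin d)) (he₁ : e₁ = EuclideanSpace.single (⟨0, by omega⟩ : Fin d) 1)
    (S : Set (EuclideanSpace ℝ (Fin d))) (hSm : MeasurableSet S)
    (hSsub : S ⊆ closedBall xbar r)
    (hline : ∀ x ∈ S, ∀ y ∈ S, (∃ s : ℝ, y - x = s • e₁) → ‖y - x‖ < a) :
    volume S ≤
        ENNReal.ofReal a * volume (closedBall (0 : EuclideanSpace ℝ (Fin (d - 1))) r) ∧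
      (a = δ * r / Real.sqrt d → volume S ≤ ENNReal.ofReal δ * volume (closedBall xbar r)) := by
  obtain ⟨n, rfl⟩ : ∃ n, d = n + 1 := ⟨d - 1, by omega⟩
  have hn : 1 ≤ n := by omega
  have he₁' : e₁ = EuclideanSpace.single (0 : Fin (n+1)) 1 := by
    rw [he₁]; congr 1
  set φ := (MeasurableEquiv.toLp 2 (Fin (n+1) → ℝ)).symm with hφ
  set ψ := MeasurableEquiv.piFinSuccAbove (fun _ : Fin (n+1) => ℝ) 0 with hψ
  set e := φ.trans ψ with he
  have hmp : MeasurePreserving e :=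
    (volume_preserving_piFinSuccAbove (fun _ => ℝ) 0).comp
      (EuclideanSpace.volume_preserving_symm_measurableEquiv_toLp _)
  -- coordinates of e.symm
  have hc0 : ∀ (t : ℝ) (y : Fin n → ℝ), e.symm (t, y) 0 = t := by
    intro t y
    show (φ.symm (ψ.symm (t, y))) 0 = t
    rw [hψ, MeasurableEquiv.piFinSuccAbove_symm_apply]
    exact Fin.insertNth_apply_same (α := fun _ : Fin (n+1) => ℝ) 0 t y
  have hcs : ∀ (t : ℝ) (y : Fin n → ℝ) (j : Fin n), e.symm (t, y) j.succ = y j := by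
    intro t y j
    show (φ.symm (ψ.symm (t, y))) j.succ = y j
    rw [hψ, MeasurableEquiv.piFinSuccAbove_symm_apply]
    rw [show (j.succ) = (0 : Fin (n+1)).succAbove j from rfl]
    exact Fin.insertNth_apply_succAbove (α := fun _ : Fin (n+1) => ℝ) 0 t y j
  set T : Set (ℝ × (Fin n → ℝ)) := e.symm ⁻¹' S with hT
  have hTm : MeasurableSet T := e.symm.measurable hSm
  have hvolT : volume T = volume S := (MeasurePreserving.symm e hmp).measure_preimage hSm.nullMeasurableSet
  set c : EuclideanSpace ℝ (Fin n) :=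
    ((MeasurableEquiv.toLp 2 (Fin n → ℝ)).symm).symm (fun j => xbar j.succ) with hcdef
  set K : Set (Fin n → ℝ) := ((MeasurableEquiv.toLp 2 (Fin n → ℝ)).symm).symm ⁻¹' (closedBall c r)
    with hKdef
  have hKm : MeasurableSet K :=
    ((MeasurableEquiv.toLp 2 (Fin n → ℝ)).symm).symm.measurable measurableSet_closedBall
  have hvolK : volume K = volume (closedBall c r) :=
    (MeasurePreserving.symm _ (EuclideanSpace.volume_preserving_symm_measurableEquiv_toLp (Fin n))).measure_preimage
      measurableSet_closedBall.nullMeasurableSet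
  have key : ∀ y : Fin n → ℝ,
      volume ((fun t => (t, y)) ⁻¹' T) ≤ K.indicator (fun _ => ENNReal.ofReal a) y := by
    intro y
    by_cases hy : ((fun t => (t, y)) ⁻¹' T).Nonempty
    · obtain ⟨t₀, ht₀⟩ := hy
      have hp₀ : e.symm (t₀, y) ∈ S := ht₀
      have hyK : y ∈ K := by
        show ((MeasurableEquiv.toLp 2 (Fin n → ℝ)).symm).symm y ∈ closedBall c r
        rw [mem_closedBall]
        have hdist : dist (e.symm (t₀, y)) xbar ≤ r := hSsub hp₀
        rw [EuclideanSpace.dist_eq] at hdist ⊢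
        refine le_trans (Real.sqrt_le_sqrt ?_) hdist
        rw [Fin.sum_univ_succ]
        have hterm : ∀ j : Fin n,
            dist (((MeasurableEquiv.toLp 2 (Fin n → ℝ)).symm).symm y j) (c j) ^ 2
              = dist (e.symm (t₀, y) j.succ) (xbar j.succ) ^ 2 := by
          intro j
          rw [hcs t₀ y j]
          congr 1
        rw [Finset.sum_congr rfl (fun j _ => hterm j)]
        have h0 : (0:ℝ) ≤ dist (e.symm (t₀, y) 0) (xbar 0) ^ 2 := sq_nonneg _
        linarith
      rw [Set.indicator_of_mem hyK]
      refine le_trans (Real.volume_le_diam _) (EMetric.diam_le ?_)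
      intro t₁ h₁ t₂ h₂
      have hp : e.symm (t₁, y) ∈ S := h₁
      have hq : e.symm (t₂, y) ∈ S := h₂
      have hqp : e.symm (t₂, y) - e.symm (t₁, y) = (t₂ - t₁) • e₁ := by
        rw [he₁']
        ext i
        rw [PiLp.sub_apply, PiLp.smul_apply]
        induction i using Fin.cases with
        | zero =>
            rw [hc0, hc0, EuclideanSpace.single_apply]
            simp
        | succ j =>
            rw [hcs, hcs, EuclideanSpace.single_apply]
            simp [Fin.succ_ne_zero]
      have hnorm : ‖e.symm (t₂, y) - e.symm (t₁, y)‖ = |t₂ - t₁| := by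
        rw [hqp, he₁', norm_smul, EuclideanSpace.norm_single, norm_one, mul_one,
          Real.norm_eq_abs]
      have hlt : |t₂ - t₁| < a := by
        rw [← hnorm]
        exact hline _ hp _ hq ⟨t₂ - t₁, hqp⟩
      rw [edist_dist]
      exact ENNReal.ofReal_le_ofReal (by rw [Real.dist_eq, abs_sub_comm]; exact hlt.le)
    · rw [Set.not_nonempty_iff_eq_empty] at hy
      rw [hy]
      simp
  have h1 : volume S ≤ ENNReal.ofReal a
      * volume (closedBall (0 : EuclideanSpace ℝ (Fin n)) r) := by
    calc volume S = volume T := hvolT.symm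
      _ = ∫⁻ y, volume ((fun t => (t, y)) ⁻¹' T) := by
          rw [Measure.volume_eq_prod, Measure.prod_apply_symm hTm]
      _ ≤ ∫⁻ y, K.indicator (fun _ => ENNReal.ofReal a) y := lintegral_mono key
      _ = ENNReal.ofReal a * volume K := by
          rw [lintegral_indicator hKm, setLIntegral_const, mul_comm]
      _ = ENNReal.ofReal a * volume (closedBall c r) := by rw [hvolK]
      _ = ENNReal.ofReal a * volume (closedBall (0 : EuclideanSpace ℝ (Fin n)) r) := by
          rw [Measure.addHaar_closedBall_center]
  refine ⟨h1, fun haeq => ?_⟩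
  refine h1.trans ?_
  haveI : Nonempty (Fin n) := Fin.pos_iff_nonempty.mp (by omega)
  rw [Measure.addHaar_closedBall_center volume xbar,
    EuclideanSpace.volume_closedBall, EuclideanSpace.volume_closedBall]
  simp only [Fintype.card_fin]
  rw [← ENNReal.ofReal_pow hr.le, ← ENNReal.ofReal_pow hr.le,
    ← ENNReal.ofReal_mul (by positivity), ← ENNReal.ofReal_mul ha.le,
    ← ENNReal.ofReal_mul (by positivity), ← ENNReal.ofReal_mul hδ0.le]
  apply ENNReal.ofReal_le_ofReal
  -- now a real inequality
  have hπ := Real.pi_pos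
  set p := Real.sqrt Real.pi with hp
  set s := Real.sqrt ((n : ℝ) + 1) with hs
  have hspos : 0 < s := Real.sqrt_pos.2 (by positivity)
  have hppos : 0 < p := Real.sqrt_pos.2 hπ
  have hG1pos : 0 < Real.Gamma ((n : ℝ) / 2 + 1) := Real.Gamma_pos_of_pos (by positivity)
  have hG2pos : 0 < Real.Gamma (((n : ℝ) + 1) / 2 + 1) := Real.Gamma_pos_of_pos (by positivity)
  have hcore : Real.Gamma (((n : ℝ) + 1) / 2 + 1) ≤ p * s * Real.Gamma ((n : ℝ) / 2 + 1) := by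
    have hg := gamma_step ((n : ℝ) / 2 + 1/2) (by positivity)
    have e1 : (n : ℝ) / 2 + 1/2 + 1 = ((n : ℝ) + 1) / 2 + 1 := by ring
    have e2 : (n : ℝ) / 2 + 1/2 + 1/2 = (n : ℝ) / 2 + 1 := by ring
    rw [e1, e2] at hg
    refine hg.trans ?_
    have hle : Real.sqrt ((n : ℝ) / 2 + 1) ≤ p * s := by
      rw [hp, hs, ← Real.sqrt_mul hπ.le]
      apply Real.sqrt_le_sqrt
      nlinarith [Real.pi_gt_three]
    exact mul_le_mul_of_nonneg_right hle hG1pos.le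
  have hcast : Real.sqrt ((n : ℕ) + 1 : ℕ) = s := by
    rw [hs]; norm_num
  rw [haeq, hcast]
  have harg : ((n : ℝ) + 1) / 2 + 1 = ((n + 1 : ℕ) : ℝ) / 2 + 1 := by push_cast; ring
  rw [← harg]
  have key2 : 1 / (s * Real.Gamma ((n : ℝ) / 2 + 1))
      ≤ p / Real.Gamma (((n : ℝ) + 1) / 2 + 1) := by
    rw [div_le_div_iff₀ (by positivity) hG2pos]
    nlinarith [hcore]
  calc δ * r / s * (r ^ n * (p ^ n / Real.Gamma ((n : ℝ) / 2 + 1)))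
      = (δ * r ^ (n+1) * p ^ n) * (1 / (s * Real.Gamma ((n : ℝ) / 2 + 1))) := by
        field_simp
        ring
    _ ≤ (δ * r ^ (n+1) * p ^ n) * (p / Real.Gamma (((n : ℝ) + 1) / 2 + 1)) := by
        apply mul_le_mul_of_nonneg_left key2 (by positivity)
    _ = δ * (r ^ (n+1) * (p ^ (n+1) / Real.Gamma (((n : ℝ) + 1) / 2 + 1))) := by
        rw [pow_succ]
        field_simp
        ring
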